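/- Fix a positive integer k and let P″ be the lattice triangle in ℝ² with vertices (0,0), (−(k+1), 0), and (−3k, 4k). Then the number of lattice points of ℤ² in P″ equals C(2k+2, 2) + 1 = (2k+2)(2k+1)/2 + 1. -/

import Mathlib

open Finset

lemma ediv_add_neg_ediv (a n : ℤ) (hn : 0 < n) :
    a / n + (-a) / n = if n ∣ a then 0 else -1 := by
  by_cases h : n ∣ a
  · obtain ⟨c, rfl⟩ := h
    rw [if_pos ⟨c, rfl⟩, ← mul_neg, Int.mul_ediv_cancel_left _ hn.ne',
      Int.mul_ediv_cancel_left _ hn.ne']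
    ring
  · rw [if_neg h]
    have h1 := Int.mul_ediv_add_emod a n
    have h2 := Int.mul_ediv_add_emod (-a) n
    have hr0 : 0 ≤ a % n := Int.emod_nonneg a hn.ne'
    have hrn : a % n < n := Int.emod_lt_of_pos a hn
    have hrne : a % n ≠ 0 := fun hc => h (Int.dvd_of_emod_eq_zero hc)
    have h3 : (-a) % n = n - a % n := by
      have e1 : (-a) % n = (n - a % n) % n := by
        rw [Int.emod_eq_emod_iff_emod_sub_eq_zero]
        have e2 : (-a - (n - a % n)) = n * (-(a / n) - 1) := by linear_combination h1
        rw [e2]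
        exact Int.mul_emod_right _ _
      rw [e1, Int.emod_eq_of_lt (by omega) (by omega)]
    have : n * (a / n + (-a) / n) = n * (-1) := by
      rw [h3] at h2; linear_combination h1 + h2
    exact mul_left_cancel₀ hn.ne' this

open Classical in
lemma refl_sum (m n : ℤ) (hn : 0 < n) (N : ℕ) (hd : n ∣ m * N) :
    2 * ∑ y ∈ Finset.range (N + 1), m * (y : ℤ) / n
      = (N + 1) * (m * N / n) - (N + 1)
        + ((Finset.range (N + 1)).filter (fun y : ℕ => n ∣ m * (y : ℤ))).card := by
  have hrefl : ∑ y ∈ Finset.range (N + 1), m * ((N - y : ℕ) : ℤ) / n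
      = ∑ y ∈ Finset.range (N + 1), m * (y : ℤ) / n := by
    have := Finset.sum_range_reflect (fun y : ℕ => m * (y : ℤ) / n) (N + 1)
    simpa using this
  have key : ∀ y ∈ Finset.range (N + 1),
      m * (y : ℤ) / n + m * ((N - y : ℕ) : ℤ) / n
        = m * N / n - 1 + (if n ∣ m * (y : ℤ) then (1 : ℤ) else 0) := by
    intro y hy
    have hyN : y ≤ N := by simpa [Nat.lt_succ_iff] using hy
    have hcast : ((N - y : ℕ) : ℤ) = (N : ℤ) - y := by
      push_cast [Nat.cast_sub hyN]; ring
    rw [hcast]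
    have : m * ((N : ℤ) - y) = m * N + -(m * y) := by ring
    rw [this, Int.add_ediv_of_dvd_left hd]
    have := ediv_add_neg_ediv (m * y) n hn
    by_cases h : n ∣ m * (y : ℤ) <;> simp [h] at this ⊢ <;> omega
  calc 2 * ∑ y ∈ Finset.range (N + 1), m * (y : ℤ) / n
      = ∑ y ∈ Finset.range (N + 1), (m * (y : ℤ) / n + m * ((N - y : ℕ) : ℤ) / n) := by
        rw [Finset.sum_add_distrib, hrefl]; ring
    _ = ∑ y ∈ Finset.range (N + 1),
          (m * N / n - 1 + (if n ∣ m * (y : ℤ) then (1 : ℤ) else 0)) :=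
        Finset.sum_congr rfl key
    _ = (N + 1) * (m * N / n) - (N + 1)
        + ((Finset.range (N + 1)).filter (fun y : ℕ => n ∣ m * (y : ℤ))).card := by
        rw [Finset.sum_add_distrib, Finset.sum_const, Finset.card_range, Finset.sum_boole,
          nsmul_eq_mul, Nat.cast_add, Nat.cast_one]
        ring

open Classical in
lemma card_filter_four (k : ℕ) :
    ((Finset.range (4 * k + 1)).filter (fun y : ℕ => (4 : ℤ) ∣ (-3) * (y : ℤ))).card
      = k + 1 := by
  have hpred : ∀ y : ℕ, ((4 : ℤ) ∣ (-3) * (y : ℤ)) ↔ 4 ∣ y := by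
    intro y
    constructor
    · intro h
      have hco : IsCoprime (4 : ℤ) (-3 : ℤ) := ⟨1, 1, by ring⟩
      have h4 : (4 : ℤ) ∣ (y : ℤ) := hco.dvd_of_dvd_mul_left h
      exact_mod_cast h4
    · intro h
      exact Dvd.dvd.mul_left (by exact_mod_cast h) _
  have : ((Finset.range (4 * k + 1)).filter (fun y : ℕ => (4 : ℤ) ∣ (-3) * (y : ℤ)))
      = (Finset.range (k + 1)).image (fun q => 4 * q) := by
    ext z
    simp only [Finset.mem_filter, Finset.mem_range, Finset.mem_image, hpred]
    constructor
    · rintro ⟨h1, t, rfl⟩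
      exact ⟨t, by omega, by ring⟩
    · rintro ⟨q, hq, rfl⟩
      exact ⟨by omega, ⟨q, by ring⟩⟩
  rw [this, Finset.card_image_of_injective _ (fun a b h => by omega), Finset.card_range]

open Classical in
lemma card_filter_4k (k : ℕ) (hk : 0 < k) :
    ((Finset.range (4 * k + 1)).filter
      (fun y : ℕ => (4 * (k : ℤ)) ∣ (2 * (k : ℤ) - 1) * (y : ℤ))).card = 2 := by
  have hpred : ∀ y : ℕ, ((4 * (k : ℤ)) ∣ (2 * (k : ℤ) - 1) * (y : ℤ)) ↔ 4 * k ∣ y := by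
    intro y
    constructor
    · intro h
      have hco : IsCoprime (4 * (k : ℤ)) (2 * (k : ℤ) - 1) :=
        ⟨1 - (k : ℤ), 2 * (k : ℤ) - 1, by ring⟩
      have h4 : (4 * (k : ℤ)) ∣ (y : ℤ) := hco.dvd_of_dvd_mul_left h
      have : ((4 * k : ℕ) : ℤ) ∣ (y : ℤ) := by push_cast; convert h4 using 2
      exact_mod_cast this
    · intro h
      have : ((4 * k : ℕ) : ℤ) ∣ (y : ℤ) := by exact_mod_cast h
      have h2 : (4 * (k : ℤ)) ∣ (y : ℤ) := by push_cast at this; convert this using 1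
      exact h2.mul_left _
  have : ((Finset.range (4 * k + 1)).filter
      (fun y : ℕ => (4 * (k : ℤ)) ∣ (2 * (k : ℤ) - 1) * (y : ℤ)))
      = ({0, 4 * k} : Finset ℕ) := by
    ext z
    simp only [Finset.mem_filter, Finset.mem_range, Finset.mem_insert,
      Finset.mem_singleton, hpred]
    constructor
    · rintro ⟨h1, t, rfl⟩
      rcases Nat.lt_or_ge t 2 with ht | ht
      · interval_cases t <;> omega
      · exfalso
        have : 4 * k * 2 ≤ 4 * k * t := Nat.mul_le_mul_left _ ht
        omega
    · rintro (rfl | rfl)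
      · exact ⟨by omega, ⟨0, by ring⟩⟩
      · exact ⟨by omega, ⟨1, by ring⟩⟩
  rw [this]
  rw [Finset.card_insert_of_notMem (by simp; omega), Finset.card_singleton]

lemma sum1 (k : ℕ) (hk : 0 < k) :
    ∑ y ∈ Finset.range (4 * k + 1), (-3) * (y : ℤ) / 4
      = -(6 * (k : ℤ) * k + 3 * k) := by
  have h := refl_sum (-3) 4 (by norm_num) (4 * k) ⟨-3 * k, by push_cast; ring⟩
  rw [card_filter_four k] at h
  have h2 : ((-3) * ((4 * k : ℕ) : ℤ)) / 4 = -(3 * (k : ℤ)) := by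
    have : ((-3) * ((4 * k : ℕ) : ℤ)) = 4 * (-(3 * (k : ℤ))) := by push_cast; ring
    rw [this, Int.mul_ediv_cancel_left _ (by norm_num)]
  rw [h2] at h
  push_cast at h
  linarith

lemma sum2 (k : ℕ) (hk : 0 < k) :
    ∑ y ∈ Finset.range (4 * k + 1), (2 * (k : ℤ) - 1) * (y : ℤ) / (4 * k)
      = 4 * (k : ℤ) * k - 3 * k := by
  have hk' : (0 : ℤ) < 4 * k := by positivity
  have h := refl_sum (2 * (k : ℤ) - 1) (4 * k) hk' (4 * k)
    ⟨2 * (k : ℤ) - 1, by push_cast; ring⟩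
  rw [card_filter_4k k hk] at h
  have h2 : ((2 * (k : ℤ) - 1) * ((4 * k : ℕ) : ℤ)) / (4 * k) = 2 * (k : ℤ) - 1 := by
    have : ((2 * (k : ℤ) - 1) * ((4 * k : ℕ) : ℤ)) = (4 * (k : ℤ)) * (2 * (k : ℤ) - 1) := by
      push_cast; ring
    rw [this, Int.mul_ediv_cancel_left _ hk'.ne']
  rw [h2] at h
  push_cast at h
  linarith

lemma tri_mem (k : ℕ) (hk : 0 < k) (x y : ℝ) :
    (x, y) ∈ convexHull ℝ ({(0, 0), (-((k + 1 : ℕ) : ℝ), 0),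
        (-((3 * k : ℕ) : ℝ), ((4 * k : ℕ) : ℝ))} : Set (ℝ × ℝ)) ↔
      0 ≤ y ∧ 4 * x + 3 * y ≤ 0 ∧
        0 ≤ 4 * (k : ℝ) * x + (2 * (k : ℝ) - 1) * y + 4 * (k : ℝ) * ((k : ℝ) + 1) := by
  have hk1 : (1 : ℝ) ≤ (k : ℝ) := by exact_mod_cast hk
  have hkpos : (0 : ℝ) < (k : ℝ) := by linarith
  set p0 : ℝ × ℝ := (0, 0) with hp0
  set p1 : ℝ × ℝ := (-((k + 1 : ℕ) : ℝ), 0) with hp1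
  set p2 : ℝ × ℝ := (-((3 * k : ℕ) : ℝ), ((4 * k : ℕ) : ℝ)) with hp2
  have hp1' : p1 = (-((k : ℝ) + 1), 0) := by rw [hp1]; push_cast; ring_nf
  have hp2' : p2 = (-(3 * (k : ℝ)), 4 * (k : ℝ)) := by rw [hp2]; push_cast; ring_nf
  constructor
  · intro h
    have hsub : ({p0, p1, p2} : Set (ℝ × ℝ)) ⊆
        {p : ℝ × ℝ | 0 ≤ p.2 ∧ 4 * p.1 + 3 * p.2 ≤ 0 ∧
          0 ≤ 4 * (k : ℝ) * p.1 + (2 * (k : ℝ) - 1) * p.2 + 4 * (k : ℝ) * ((k : ℝ) + 1)} := by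
      rintro p (rfl | rfl | rfl)
      · rw [hp0]; simp only [Set.mem_setOf_eq]
        norm_num
        nlinarith
      · rw [hp1']; simp only [Set.mem_setOf_eq]
        norm_num
        constructor
        · nlinarith
        · nlinarith
      · rw [hp2']; simp only [Set.mem_setOf_eq]
        refine ⟨by positivity, by nlinarith, by nlinarith⟩
    have hconv : Convex ℝ {p : ℝ × ℝ | 0 ≤ p.2 ∧ 4 * p.1 + 3 * p.2 ≤ 0 ∧
        0 ≤ 4 * (k : ℝ) * p.1 + (2 * (k : ℝ) - 1) * p.2 + 4 * (k : ℝ) * ((k : ℝ) + 1)} := by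
      intro p hp q hq a b ha hb hab
      simp only [Set.mem_setOf_eq, Prod.smul_fst, Prod.smul_snd, Prod.fst_add, Prod.snd_add,
        smul_eq_mul] at *
      have habk : (a + b) * (4 * (k:ℝ) * ((k:ℝ) + 1)) = 4 * (k:ℝ) * ((k:ℝ) + 1) := by
        rw [hab]; ring
      refine ⟨by nlinarith [mul_nonneg ha hp.1, mul_nonneg hb hq.1],
        by nlinarith [mul_nonpos_of_nonneg_of_nonpos ha hp.2.1,
          mul_nonpos_of_nonneg_of_nonpos hb hq.2.1],
        by nlinarith [mul_nonneg ha hp.2.2, mul_nonneg hb hq.2.2, habk]⟩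
    exact convexHull_min hsub hconv h
  · rintro ⟨h1, h2, h3⟩
    set a : ℝ := (4 * k * (k + 1) + 4 * k * x + (2 * k - 1) * y) / (4 * k * (k + 1)) with ha
    set b : ℝ := -(4 * x + 3 * y) / (4 * (k + 1)) with hb
    set c : ℝ := y / (4 * k) with hc
    have hden1 : (0 : ℝ) < 4 * k * (k + 1) := by positivity
    have hden2 : (0 : ℝ) < 4 * (k + 1) := by positivity
    have hden3 : (0 : ℝ) < 4 * k := by positivity
    have ha0 : 0 ≤ a := div_nonneg (by linarith) hden1.le
    have hb0 : 0 ≤ b := div_nonneg (by linarith) hden2.le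
    have hc0 : 0 ≤ c := div_nonneg h1 hden3.le
    have hsum : a + b + c = 1 := by
      rw [ha, hb, hc]; field_simp; ring
    have hmem := Finset.centerMass_mem_convexHull (Finset.univ : Finset (Fin 3))
      (w := ![a, b, c]) (z := ![p0, p1, p2])
      (by intro i _
          fin_cases i
          · simpa using ha0
          · simpa using hb0
          · simpa using hc0)
      (by simp [Fin.sum_univ_three]; rw [hsum]; norm_num)
      (by intro i _; fin_cases i <;> simp [Set.mem_insert_iff])
      (s := {p0, p1, p2})
    have hcm : (Finset.univ : Finset (Fin 3)).centerMass ![a, b, c] ![p0, p1, p2] = (x, y) := by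
      rw [Finset.centerMass]
      simp only [Fin.sum_univ_three, Matrix.cons_val_zero, Matrix.cons_val_one, Matrix.head_cons,
        Matrix.cons_val_two, Matrix.tail_cons]
      rw [hsum]
      rw [hp0, hp1', hp2']
      simp only [inv_one, one_smul, Prod.smul_mk, smul_eq_mul, Prod.mk_add_mk]
      refine Prod.ext ?_ ?_
      · show a * 0 + b * (-((k:ℝ) + 1)) + c * (-(3 * (k:ℝ))) = x
        rw [hb, hc]; field_simp; ring
      · show a * 0 + b * 0 + c * (4 * (k:ℝ)) = y
        rw [hc]; field_simp; ring
    rw [← hcm]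
    exact hmem

lemma int_iff (k : ℕ) (hk : 0 < k) (x y : ℤ) :
    (0 ≤ y ∧ 4 * x + 3 * y ≤ 0 ∧
      0 ≤ 4 * (k : ℤ) * x + (2 * (k : ℤ) - 1) * y + 4 * (k : ℤ) * ((k : ℤ) + 1)) ↔
    (0 ≤ y ∧ y ≤ 4 * (k : ℤ) ∧
      -((k : ℤ) + 1) - (2 * (k : ℤ) - 1) * y / (4 * (k : ℤ)) ≤ x ∧ x ≤ (-3) * y / 4) := by
  have hk0 : (0 : ℤ) ≤ (k : ℤ) := Int.ofNat_nonneg k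
  have hk' : (0 : ℤ) < 4 * (k : ℤ) := by positivity
  have h4 : (0 : ℤ) < 4 := by norm_num
  constructor
  · rintro ⟨h1, h2, h3⟩
    have hprod : (k : ℤ) * (4 * x + 3 * y) ≤ 0 := by
      rcases mul_le_mul_of_nonneg_left h2 hk0 with h
      simpa using h
    refine ⟨h1, ?_, ?_, ?_⟩
    · have h6 : ((k : ℤ) + 1) * y ≤ ((k : ℤ) + 1) * (4 * k) := by nlinarith
      exact le_of_mul_le_mul_left h6 (by positivity)
    · have hstep : -x - ((k : ℤ) + 1) ≤ (2 * (k : ℤ) - 1) * y / (4 * (k : ℤ)) := by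
        rw [Int.le_ediv_iff_mul_le hk']
        nlinarith
      linarith
    · rw [Int.le_ediv_iff_mul_le h4]
      linarith
  · rintro ⟨h1, hy, hlo, hhi⟩
    have hhi' : x * 4 ≤ -3 * y := (Int.le_ediv_iff_mul_le h4).mp hhi
    have hlo' : (-x - ((k : ℤ) + 1)) * (4 * (k : ℤ)) ≤ (2 * (k : ℤ) - 1) * y := by
      rw [← Int.le_ediv_iff_mul_le hk']
      linarith
    exact ⟨h1, by linarith, by nlinarith⟩

theorem stmt_18 (k : ℕ) (hk : 0 < k) :
    Set.ncard {v : ℤ × ℤ |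
        ((v.1 : ℝ), (v.2 : ℝ)) ∈
          convexHull ℝ ({(0, 0), (-((k + 1 : ℕ) : ℝ), 0),
            (-((3 * k : ℕ) : ℝ), ((4 * k : ℕ) : ℝ))} : Set (ℝ × ℝ))} =
      (2 * k + 2) * (2 * k + 1) / 2 + 1 := by
  classical
  set lo : ℕ → ℤ := fun y => -((k : ℤ) + 1) - (2 * (k : ℤ) - 1) * (y : ℤ) / (4 * (k : ℤ))
    with hlo_def
  set hi : ℕ → ℤ := fun y => (-3) * (y : ℤ) / 4 with hhi_def
  set T : Finset (ℤ × ℤ) := (Finset.range (4 * k + 1)).biUnion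
    (fun y => (Finset.Icc (lo y) (hi y)).image (fun x => (x, (y : ℤ)))) with hT
  -- Step 1: the set equals ↑T
  have hset : {v : ℤ × ℤ |
      ((v.1 : ℝ), (v.2 : ℝ)) ∈
        convexHull ℝ ({(0, 0), (-((k + 1 : ℕ) : ℝ), 0),
          (-((3 * k : ℕ) : ℝ), ((4 * k : ℕ) : ℝ))} : Set (ℝ × ℝ))} = ↑T := by
    ext ⟨x, y⟩
    simp only [Set.mem_setOf_eq, hT, Finset.coe_biUnion, Set.mem_iUnion, Finset.mem_coe,
      Finset.mem_image, Finset.mem_range, Finset.mem_Icc]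
    rw [tri_mem k hk]
    have hreal : (0 ≤ (y : ℝ) ∧ 4 * (x : ℝ) + 3 * (y : ℝ) ≤ 0 ∧
        0 ≤ 4 * (k : ℝ) * (x : ℝ) + (2 * (k : ℝ) - 1) * (y : ℝ) + 4 * (k : ℝ) * ((k : ℝ) + 1)) ↔
        (0 ≤ y ∧ 4 * x + 3 * y ≤ 0 ∧
          0 ≤ 4 * (k : ℤ) * x + (2 * (k : ℤ) - 1) * y + 4 * (k : ℤ) * ((k : ℤ) + 1)) := by
      constructor
      · rintro ⟨a1, a2, a3⟩
        exact ⟨by exact_mod_cast a1, by exact_mod_cast a2, by exact_mod_cast a3⟩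
      · rintro ⟨a1, a2, a3⟩
        exact ⟨by exact_mod_cast a1, by exact_mod_cast a2, by exact_mod_cast a3⟩
    rw [hreal, int_iff k hk]
    constructor
    · rintro ⟨h1, hy, hl, hh⟩
      refine ⟨y.toNat, by omega, x, ⟨?_, ?_⟩, ?_⟩
      · rw [hlo_def]; simpa [Int.toNat_of_nonneg h1] using hl
      · rw [hhi_def]; simpa [Int.toNat_of_nonneg h1] using hh
      · simp [Int.toNat_of_nonneg h1]
    · rintro ⟨y', hy', x', ⟨hl, hh⟩, heq⟩
      obtain ⟨rfl, rfl⟩ : x' = x ∧ (y' : ℤ) = y := by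
        constructor <;> [exact congrArg Prod.fst heq; exact congrArg Prod.snd heq]
      refine ⟨by positivity, by exact_mod_cast (by omega : y' ≤ 4 * k), ?_, ?_⟩
      · rw [hlo_def] at hl; exact hl
      · rw [hhi_def] at hh; exact hh
  rw [hset, Set.ncard_coe_finset]
  -- Step 2: card of T
  have hcard : T.card = ∑ y ∈ Finset.range (4 * k + 1), (hi y + 1 - lo y).toNat := by
    rw [hT, Finset.card_biUnion]
    · exact Finset.sum_congr rfl (fun y _ => by
        rw [Finset.card_image_of_injective _ (fun a b h => congrArg Prod.fst h), Int.card_Icc])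
    · intro a _ b _ hab
      simp only [Finset.disjoint_left, Finset.mem_image]
      rintro ⟨p1, p2⟩ ⟨u, _, hu⟩ ⟨v, _, hv⟩
      apply hab
      have h1 : ((a : ℤ)) = p2 := congrArg Prod.snd hu
      have h2 : ((b : ℤ)) = p2 := congrArg Prod.snd hv
      exact_mod_cast h1.trans h2.symm
  rw [hcard]
  -- Step 3: compute the sum
  have hk1 : (1 : ℤ) ≤ (k : ℤ) := by exact_mod_cast hk
  have hnn : ∀ y ∈ Finset.range (4 * k + 1), 0 ≤ hi y + 1 - lo y := by
    intro y hy
    have hyk : (y : ℤ) ≤ 4 * k := by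
      have := Finset.mem_range.mp hy
      have : y ≤ 4 * k := by omega
      exact_mod_cast this
    have kpos : (0 : ℤ) < (k : ℤ) := by exact_mod_cast hk
    set A : ℤ := (-3) * (y : ℤ) / 4 with hA
    set B : ℤ := (2 * (k : ℤ) - 1) * (y : ℤ) / (4 * (k : ℤ)) with hB
    have e1 : (-3) * (y : ℤ) < (A + 1) * 4 :=
      Int.lt_ediv_add_one_mul_self _ (by norm_num)
    have e2 : (2 * (k : ℤ) - 1) * (y : ℤ) < (B + 1) * (4 * (k : ℤ)) :=
      Int.lt_ediv_add_one_mul_self _ (by positivity)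
    have g1 : (k : ℤ) * ((-3) * (y : ℤ)) < (k : ℤ) * ((A + 1) * 4) :=
      mul_lt_mul_of_pos_left e1 kpos
    have g3 : ((k : ℤ) + 1) * (y : ℤ) ≤ ((k : ℤ) + 1) * (4 * (k : ℤ)) :=
      mul_le_mul_of_nonneg_left hyk (by positivity)
    have hgoal : hi y + 1 - lo y = A + 1 - (-((k : ℤ) + 1) - B) := by
      simp only [hhi_def, hlo_def, hA, hB]
    rw [hgoal]
    have hS : (4 * (k : ℤ)) * (-1) < (4 * (k : ℤ)) * (A + 1 - (-((k : ℤ) + 1) - B)) := by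
      nlinarith [e2, g1, g3]
    have := lt_of_mul_lt_mul_left hS (by positivity)
    linarith
  have hsumZ : ∑ y ∈ Finset.range (4 * k + 1), (hi y + 1 - lo y)
      = 2 * (k : ℤ) * k + 3 * k + 2 := by
    have hterm : ∀ y ∈ Finset.range (4 * k + 1), hi y + 1 - lo y
        = (-3) * (y : ℤ) / 4 + (2 * (k : ℤ) - 1) * (y : ℤ) / (4 * (k : ℤ)) + ((k : ℤ) + 2) := by
      intro y _
      rw [hhi_def, hlo_def]
      ring
    rw [Finset.sum_congr rfl hterm, Finset.sum_add_distrib, Finset.sum_add_distrib,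
      Finset.sum_const, Finset.card_range, sum1 k hk, sum2 k hk, nsmul_eq_mul]
    push_cast
    ring
  have hfin : ∑ y ∈ Finset.range (4 * k + 1), (hi y + 1 - lo y).toNat
      = 2 * k * k + 3 * k + 2 := by
    have : ((∑ y ∈ Finset.range (4 * k + 1), (hi y + 1 - lo y).toNat : ℕ) : ℤ)
        = 2 * (k : ℤ) * k + 3 * k + 2 := by
      rw [Nat.cast_sum]
      rw [Finset.sum_congr rfl (fun y hy => Int.toNat_of_nonneg (hnn y hy))]
      exact hsumZ
    exact_mod_cast this
  rw [hfin]
  have hrhs : (2 * k + 2) * (2 * k + 1) = 2 * (2 * k * k + 3 * k + 1) := by ring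
  rw [hrhs, Nat.mul_div_cancel_left _ (by norm_num : 0 < 2)]
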